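/- arXiv:1309.7441 — 2 statements merged into one kernel-verified Lean document; each statement's English description precedes it below -/
import Mathlib

section
/- There exists exactly one function V ∈ C²(ℝ) such that V > 0 on ℝ, V''(z) + f(V(z)) = 0 for all z ∈ ℝ, V(0) = θ, V'(0) = 0, and V(z) → 0 as z → ±∞. Moreover this V is even, strictly decreasing on [0,∞), and satisfies the first integral V'(z)² = F(V(z)) for all z ∈ ℝ. -/
open Set Filter MeasureTheory

noncomputable def Fint (f : ℝ → ℝ) (u : ℝ) : ℝ := -2 * ∫ s in (0:ℝ)..u, f s

structure CondF (f : ℝ → ℝ) (α θ lam : ℝ) : Prop where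
  smooth : ContDiff ℝ 1 f
  f_zero : f 0 = 0
  df_zero : deriv f 0 < 0
  lam_def : lam = Real.sqrt (-(deriv f 0))
  alpha_pos : 0 < α
  alpha_lt : α < 1
  neg_low : ∀ s ∈ Set.Ioo (0:ℝ) α, f s < 0
  pos_mid : ∀ s ∈ Set.Ioo α (1:ℝ), 0 < f s
  neg_high : ∀ s ∈ Set.Ioi (1:ℝ), f s < 0
  df_bdd : BddBelow (deriv f '' Set.Ioi (1:ℝ))
  theta_gt : α < θ
  theta_lt : θ < 1
  F_theta : Fint f θ = 0

def GoodSol (f : ℝ → ℝ) (θ : ℝ) (W : ℝ → ℝ) : Prop :=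
  ContDiff ℝ 2 W ∧ (∀ z, 0 < W z) ∧ (∀ z, deriv (deriv W) z + f (W z) = 0) ∧
    W 0 = θ ∧ deriv W 0 = 0 ∧
    Filter.Tendsto W Filter.atTop (nhds 0) ∧ Filter.Tendsto W Filter.atBot (nhds 0)

section Helpers

variable {f : ℝ → ℝ} {α θ lam : ℝ}

lemma hasDerivAt_Fint (hf : CondF f α θ lam) (u : ℝ) :
    HasDerivAt (Fint f) (-2 * f u) u := by
  have h := (hf.smooth.continuous.integral_hasStrictDerivAt 0 u).hasDerivAt
  exact h.const_mul (-2)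

lemma Fint_zero : Fint f 0 = 0 := by simp [Fint]

lemma continuous_Fint (hf : CondF f α θ lam) : Continuous (Fint f) := by
  have : Differentiable ℝ (Fint f) := fun u => (hasDerivAt_Fint hf u).differentiableAt
  exact this.continuous

lemma f_theta_pos (hf : CondF f α θ lam) : 0 < f θ :=
  hf.pos_mid θ ⟨hf.theta_gt, hf.theta_lt⟩

lemma Fint_strictMonoOn (hf : CondF f α θ lam) : StrictMonoOn (Fint f) (Icc 0 α) := by
  apply strictMonoOn_of_deriv_pos (convex_Icc 0 α) (continuous_Fint hf).continuousOn
  intro x hx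
  rw [interior_Icc] at hx
  rw [(hasDerivAt_Fint hf x).deriv]
  have := hf.neg_low x hx
  nlinarith

lemma Fint_strictAntiOn (hf : CondF f α θ lam) : StrictAntiOn (Fint f) (Icc α 1) := by
  apply strictAntiOn_of_deriv_neg (convex_Icc α 1) (continuous_Fint hf).continuousOn
  intro x hx
  rw [interior_Icc] at hx
  rw [(hasDerivAt_Fint hf x).deriv]
  have := hf.pos_mid x hx
  nlinarith

lemma Fint_pos (hf : CondF f α θ lam) : ∀ u ∈ Ioo (0:ℝ) θ, 0 < Fint f u := by
  intro u hu
  rcases le_or_gt u α with h | h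
  · have := Fint_strictMonoOn hf (left_mem_Icc.2 (le_of_lt hf.alpha_pos))
      ⟨hu.1.le, h⟩ hu.1
    rwa [Fint_zero] at this
  · have := Fint_strictAntiOn hf ⟨h.le, (hu.2.trans hf.theta_lt).le⟩
      ⟨hf.theta_gt.le, hf.theta_lt.le⟩ hu.2
    rw [hf.F_theta] at this
    linarith

lemma Fint_neg (hf : CondF f α θ lam) : ∀ u ∈ Ioc θ (1:ℝ), Fint f u < 0 := by
  intro u hu
  have := Fint_strictAntiOn hf ⟨hf.theta_gt.le, hf.theta_lt.le⟩ ⟨(hf.theta_gt.trans hu.1).le, hu.2⟩ hu.1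
  rwa [hf.F_theta] at this

lemma Fint_nonneg (hf : CondF f α θ lam) : ∀ u ∈ Icc (0:ℝ) θ, 0 ≤ Fint f u := by
  intro u hu
  rcases eq_or_lt_of_le hu.1 with h | h
  · rw [← h, Fint_zero]
  rcases eq_or_lt_of_le hu.2 with h2 | h2
  · rw [h2, hf.F_theta]
  · exact (Fint_pos hf u ⟨h, h2⟩).le

lemma GoodSol.deriv_hasDerivAt {W : ℝ → ℝ} (hW : GoodSol f θ W) (z : ℝ) :
    HasDerivAt (deriv W) (deriv (deriv W) z) z := by
  have h2 : ContDiff ℝ ((1 : WithTop ℕ∞) + 1) W := by convert hW.1 using 2; norm_num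
  have := (contDiff_succ_iff_deriv.mp h2).2.2
  exact ((this.differentiable one_ne_zero) z).hasDerivAt

lemma GoodSol.hasDerivAt {W : ℝ → ℝ} (hW : GoodSol f θ W) (z : ℝ) :
    HasDerivAt W (deriv W z) z :=
  ((hW.1.differentiable (by norm_num)) z).hasDerivAt

lemma GoodSol.energy (hf : CondF f α θ lam) {W : ℝ → ℝ} (hW : GoodSol f θ W) (z : ℝ) :
    (deriv W z) ^ 2 = Fint f (W z) := by
  set g : ℝ → ℝ := fun u => ∫ s in (0:ℝ)..u, f s with hg_def
  have hg : ∀ u, HasDerivAt g (f u) u := fun u =>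
    (hf.smooth.continuous.integral_hasStrictDerivAt 0 u).hasDerivAt
  set E : ℝ → ℝ := fun z => (deriv W z) ^ 2 + 2 * g (W z) with hE_def
  have hE : ∀ z, HasDerivAt E 0 z := by
    intro z
    have h1 : HasDerivAt (fun z => (deriv W z) ^ 2)
        ((2 : ℕ) * (deriv W z) ^ 1 * deriv (deriv W) z) z :=
      (hW.deriv_hasDerivAt z).pow 2
    have h2 : HasDerivAt (fun z => 2 * g (W z)) (2 * (f (W z) * deriv W z)) z :=
      (((hg (W z)).comp z (hW.hasDerivAt z))).const_mul 2
    have h3 := h1.add h2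
    have hode : deriv (deriv W) z = -(f (W z)) := by
      have := hW.2.2.1 z; linarith
    refine h3.congr_deriv ?_
    rw [hode]; push_cast; ring
  have hconst : E z = E 0 :=
    is_const_of_deriv_eq_zero (fun y => (hE y).differentiableAt)
      (fun y => (hE y).deriv) z 0
  have hgθ : g θ = 0 := by
    have : Fint f θ = -2 * g θ := rfl
    rw [hf.F_theta] at this; linarith
  have hE0 : E 0 = 0 := by
    simp only [hE_def, hW.2.2.2.1, hW.2.2.2.2.1, hgθ]; ring
  have : Fint f (W z) = -2 * g (W z) := rfl
  have hEz := hconst.trans hE0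
  simp only [hE_def] at hEz
  linarith

lemma GoodSol.range (hf : CondF f α θ lam) {W : ℝ → ℝ} (hW : GoodSol f θ W) (z : ℝ) :
    W z ∈ Ioc (0:ℝ) θ := by
  refine ⟨hW.2.1 z, ?_⟩
  by_contra h
  push_neg at h
  have hθpos : (0:ℝ) < θ := hf.alpha_pos.trans hf.theta_gt
  obtain ⟨z₁, hz₁⟩ := (hW.2.2.2.2.2.1.eventually_lt_const hθpos).exists
  set t : ℝ := (θ + min (W z) 1) / 2 with ht_def
  have hmin : θ < min (W z) 1 := lt_min h hf.theta_lt
  have ht1 : θ < t := by simp only [ht_def]; linarith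
  have ht2 : t ≤ 1 := by
    have := min_le_right (W z) 1
    simp only [ht_def]; linarith [hf.theta_lt]
  have ht3 : t < W z := by
    have := min_le_left (W z) 1
    simp only [ht_def]; linarith [hmin]
  have hmem : t ∈ uIcc (W z₁) (W z) := by
    rw [uIcc_of_le (by linarith : W z₁ ≤ W z)]
    exact ⟨by linarith, ht3.le⟩
  obtain ⟨z₂, _, hz₂⟩ := intermediate_value_uIcc
    (hW.1.continuous.continuousOn (s := uIcc z₁ z)) hmem
  have hneg := Fint_neg hf t ⟨ht1, ht2⟩
  have := hW.energy hf z₂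
  rw [hz₂] at this
  nlinarith [sq_nonneg (deriv W z₂)]

lemma uniq (hf : CondF f α θ lam) {W₁ W₂ : ℝ → ℝ}
    (h1 : GoodSol f θ W₁) (h2 : GoodSol f θ W₂) : W₁ = W₂ := by
  have hθpos : (0:ℝ) < θ := hf.alpha_pos.trans hf.theta_gt
  obtain ⟨C, hC⟩ := (isCompact_Icc (a := (0:ℝ)) (b := θ)).exists_bound_of_continuousOn
    (hf.smooth.continuous_deriv le_rfl).continuousOn
  have hlipf : LipschitzOnWith C.toNNReal f (Icc 0 θ) := by
    apply Convex.lipschitzOnWith_of_nnnorm_deriv_le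
      (fun x _ => (hf.smooth.differentiable one_ne_zero) x) ?_ (convex_Icc 0 θ)
    intro x hx
    have hC0 : 0 ≤ C := (norm_nonneg _).trans (hC 0 ⟨le_rfl, hθpos.le⟩)
    rw [← norm_toNNReal]
    exact (Real.toNNReal_le_toNNReal_iff hC0).2 (hC x hx)
  set v : ℝ → ℝ × ℝ → ℝ × ℝ := fun _ p => (p.2, -f p.1) with hv_def
  set s : ℝ → Set (ℝ × ℝ) := fun _ => Icc 0 θ ×ˢ (univ : Set ℝ) with hs_def
  have hlips : ∀ t, LipschitzOnWith (max 1 (1 * C.toNNReal)) (v t) (s t) := by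
    intro t
    have lfst0 : LipschitzOnWith 1 (Prod.fst : ℝ × ℝ → ℝ) (s t) :=
      (LipschitzWith.prod_fst).lipschitzOnWith
    have lfst : LipschitzOnWith (C.toNNReal * 1) (fun p : ℝ × ℝ => f p.1) (s t) :=
      hlipf.comp lfst0 (fun p hp => hp.1)
    rw [mul_one] at lfst
    have lneg : LipschitzOnWith (1 * C.toNNReal) (fun p : ℝ × ℝ => -f p.1) (s t) :=
      LipschitzWith.comp_lipschitzOnWith (LipschitzWith.id.neg) lfst
    have lsnd : LipschitzOnWith 1 (fun p : ℝ × ℝ => p.2) (s t) :=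
      (LipschitzWith.prod_snd).lipschitzOnWith
    exact lsnd.prodMk lneg
  have hp : ∀ (W : ℝ → ℝ), GoodSol f θ W → ∀ t : ℝ,
      HasDerivAt (fun t => (W t, deriv W t)) (v t (W t, deriv W t)) t := by
    intro W hW t
    have h := (hW.hasDerivAt t).prodMk (hW.deriv_hasDerivAt t)
    have hode : deriv (deriv W) t = -f (W t) := by have := hW.2.2.1 t; linarith
    rw [hode] at h
    exact h
  have hmem : ∀ (W : ℝ → ℝ), GoodSol f θ W → ∀ t : ℝ, (W t, deriv W t) ∈ s t :=
    fun W hW t => ⟨⟨(hW.2.1 t).le, (hW.range hf t).2⟩, mem_univ _⟩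
  funext t
  have habs : -(|t| + 1) < t ∧ t < |t| + 1 := by
    constructor
    · linarith [neg_abs_le t]
    · linarith [le_abs_self t]
  have h0mem : (0:ℝ) ∈ Ioo (-(|t| + 1)) (|t| + 1) := by
    constructor <;> [linarith [abs_nonneg t]; linarith [abs_nonneg t]]
  have key := ODE_solution_unique_of_mem_Ioo (v := v) (s := s) (fun t _ => hlips t) h0mem
    (f := fun t => (W₁ t, deriv W₁ t)) (g := fun t => (W₂ t, deriv W₂ t))
    (fun t' _ => ⟨hp W₁ h1 t', hmem W₁ h1 t'⟩)
    (fun t' _ => ⟨hp W₂ h2 t', hmem W₂ h2 t'⟩)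
    (by simp only [h1.2.2.2.1, h2.2.2.2.1, h1.2.2.2.2.1, h2.2.2.2.2.1])
  have := key ⟨habs.1, habs.2⟩
  exact congrArg Prod.fst this

lemma gInt (hf : CondF f α θ lam) :
    ∀ v ∈ Ioc (0:ℝ) θ,
      IntervalIntegrable (fun u => (Real.sqrt (Fint f u))⁻¹) volume v θ := by
  have hθpos : (0:ℝ) < θ := hf.alpha_pos.trans hf.theta_gt
  have hfθ : 0 < f θ := f_theta_pos hf
  set g : ℝ → ℝ := fun u => (Real.sqrt (Fint f u))⁻¹ with hg_def
  have gmeas : Measurable g :=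
    (Real.continuous_sqrt.comp (continuous_Fint hf)).measurable.inv
  -- linear lower bound for F near θ
  obtain ⟨ε, hεpos, hεball⟩ : ∃ ε > 0, ∀ u, |u - θ| < ε → f θ / 2 < f u := by
    have h : ∀ᶠ u in nhds θ, f θ / 2 < f u :=
      (hf.smooth.continuous.continuousAt).eventually_const_lt (by linarith)
    rcases Metric.eventually_nhds_iff.1 h with ⟨ε, hε, hball⟩
    exact ⟨ε, hε, fun u hu => hball hu⟩
  set δ : ℝ := min (ε / 2) (θ / 2) with hδ_def
  have hδpos : 0 < δ := lt_min (by linarith) (by linarith)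
  have hδθ : 0 < θ - δ := by
    have : δ ≤ θ / 2 := min_le_right _ _
    linarith
  have hflow : ∀ u ∈ Icc (θ - δ) θ, f θ / 2 < f u := by
    intro u hu
    apply hεball
    have h1 : δ ≤ ε / 2 := min_le_left _ _
    rw [abs_lt]
    exact ⟨by linarith [hu.1, hu.2], by linarith [hu.1, hu.2, hεpos]⟩
  have hFlow : ∀ u ∈ Icc (θ - δ) θ, f θ * (θ - u) ≤ Fint f u := by
    intro u hu
    have hle : u ≤ θ := hu.2
    have hFTC : ∫ s in u..θ, (-2 * f s) = Fint f θ - Fint f u :=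
      intervalIntegral.integral_eq_sub_of_hasDerivAt
        (fun x _ => hasDerivAt_Fint hf x)
        ((continuous_const.mul hf.smooth.continuous).intervalIntegrable u θ)
    have hmono : ∫ s in u..θ, f θ ≤ ∫ s in u..θ, 2 * f s := by
      apply intervalIntegral.integral_mono_on hle
        (intervalIntegrable_const)
        ((continuous_const.mul hf.smooth.continuous).intervalIntegrable u θ)
      intro x hx
      have hx' : x ∈ Icc (θ - δ) θ := ⟨le_trans hu.1 hx.1, hx.2⟩
      show f θ ≤ 2 * f x; linarith [hflow x hx']
    have hconst : ∫ s in u..θ, f θ = (θ - u) * f θ := by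
      rw [intervalIntegral.integral_const]; simp [smul_eq_mul]
    have h2 : ∫ s in u..θ, 2 * f s = -(∫ s in u..θ, (-2 * f s)) := by
      rw [← intervalIntegral.integral_neg]
      congr 1; funext s; ring
    rw [hconst] at hmono
    rw [h2, hFTC, hf.F_theta] at hmono
    linarith [hmono]
  intro v hv
  rcases eq_or_lt_of_le hv.2 with heq | hlt
  · rw [heq]
  set w : ℝ := max v (θ - δ) with hw_def
  have hw1 : v ≤ w := le_max_left _ _
  have hwθ : w < θ := max_lt hlt (by linarith)
  have hw0 : 0 < w := lt_of_lt_of_le hv.1 hw1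
  have hwδ : θ - δ ≤ w := le_max_right _ _
  have i1 : IntervalIntegrable g volume v w := by
    apply ContinuousOn.intervalIntegrable
    intro x hx
    rw [uIcc_of_le hw1] at hx
    have hx' : x ∈ Ioo (0:ℝ) θ := ⟨lt_of_lt_of_le hv.1 hx.1, lt_of_le_of_lt hx.2 hwθ⟩
    have hFpos : 0 < Fint f x := Fint_pos hf x hx'
    have : ContinuousAt g x := by
      apply ContinuousAt.inv₀
      · exact (Real.continuous_sqrt.comp (continuous_Fint hf)).continuousAt
      · exact ne_of_gt (Real.sqrt_pos.2 hFpos)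
    exact this.continuousWithinAt
  have i2 : IntervalIntegrable g volume w θ := by
    have hdom : IntervalIntegrable
        (fun u => (Real.sqrt (f θ / 2))⁻¹ * ((θ - u) ^ (-(1/2) : ℝ))) volume w θ := by
      have h1 : IntervalIntegrable (fun x : ℝ => x ^ (-(1/2) : ℝ)) volume 0 (θ - w) :=
        intervalIntegral.intervalIntegrable_rpow' (by norm_num)
      have h2 := (h1.comp_sub_left θ)
      have h3 : IntervalIntegrable (fun x : ℝ => (θ - x) ^ (-(1/2) : ℝ)) volume w θ := by
        have : θ - (θ - w) = w := by ring
        have h4 := h2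
        rw [this, sub_zero] at h4
        exact h4.symm
      exact h3.const_mul _
    apply hdom.mono_fun ((gmeas.aestronglyMeasurable).restrict)
    rw [Filter.EventuallyLE, ae_restrict_iff' measurableSet_uIoc]
    apply Filter.Eventually.of_forall
    intro u hu
    rw [uIoc_of_le hwθ.le] at hu
    have hu1 : θ - δ < u := lt_of_le_of_lt hwδ hu.1
    have hθu : 0 ≤ θ - u := by linarith [hu.2]
    have hrpow : (θ - u) ^ (-(1/2) : ℝ) = (Real.sqrt (θ - u))⁻¹ := by
      rw [Real.rpow_neg hθu, Real.sqrt_eq_rpow]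
    have hRHS : 0 ≤ (Real.sqrt (f θ / 2))⁻¹ * ((θ - u) ^ (-(1/2) : ℝ)) := by
      apply mul_nonneg (inv_nonneg.2 (Real.sqrt_nonneg _))
      rw [hrpow]; exact inv_nonneg.2 (Real.sqrt_nonneg _)
    rcases eq_or_lt_of_le hu.2 with hueq | hult
    · have : g u = 0 := by
        rw [hg_def]; simp only [hueq, hf.F_theta, Real.sqrt_zero, inv_zero]
      rw [Real.norm_eq_abs, Real.norm_eq_abs, this, abs_zero]
      exact le_trans hRHS (le_abs_self _)
    · have hFlow' : f θ / 2 * (θ - u) ≤ Fint f u := by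
        have := hFlow u ⟨hu1.le, hu.2⟩
        nlinarith [hu.2, hfθ]
      have hprodpos : 0 < f θ / 2 * (θ - u) := by
        apply mul_pos (by linarith) (by linarith)
      have hsq : Real.sqrt (f θ / 2 * (θ - u)) ≤ Real.sqrt (Fint f u) :=
        Real.sqrt_le_sqrt hFlow'
      have hsqpos : 0 < Real.sqrt (f θ / 2 * (θ - u)) := Real.sqrt_pos.2 hprodpos
      have hg_le : g u ≤ (Real.sqrt (f θ / 2 * (θ - u)))⁻¹ := by
        rw [hg_def]
        exact inv_anti₀ hsqpos hsq
      have hsplit : Real.sqrt (f θ / 2 * (θ - u)) =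
          Real.sqrt (f θ / 2) * Real.sqrt (θ - u) := Real.sqrt_mul (by linarith) _
      rw [Real.norm_eq_abs, Real.norm_eq_abs, abs_of_nonneg (inv_nonneg.2 (Real.sqrt_nonneg _)),
        abs_of_nonneg hRHS]
      calc g u ≤ (Real.sqrt (f θ / 2 * (θ - u)))⁻¹ := hg_le
        _ = (Real.sqrt (f θ / 2))⁻¹ * ((θ - u) ^ (-(1/2) : ℝ)) := by
            rw [hsplit, mul_inv, hrpow]
  exact i1.trans i2

lemma exist (hf : CondF f α θ lam) :
    ∃ V : ℝ → ℝ, GoodSol f θ V ∧ (∀ z, V (-z) = V z) ∧ StrictAntiOn V (Set.Ici 0) := by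
  have hθpos : (0:ℝ) < θ := hf.alpha_pos.trans hf.theta_gt
  have hθmem : θ ∈ Ioc (0:ℝ) θ := ⟨hθpos, le_rfl⟩
  set g : ℝ → ℝ := fun u => (Real.sqrt (Fint f u))⁻¹ with hg_def
  have gmeas : Measurable g :=
    (Real.continuous_sqrt.comp (continuous_Fint hf)).measurable.inv
  have gnonneg : ∀ u, 0 ≤ g u := fun u => inv_nonneg.2 (Real.sqrt_nonneg _)
  have gpos : ∀ u ∈ Ioo (0:ℝ) θ, 0 < g u := fun u hu =>
    inv_pos.2 (Real.sqrt_pos.2 (Fint_pos hf u hu))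
  have gcontAt : ∀ u ∈ Ioo (0:ℝ) θ, ContinuousAt g u := by
    intro u hu
    apply ContinuousAt.inv₀
    · exact (Real.continuous_sqrt.comp (continuous_Fint hf)).continuousAt
    · exact ne_of_gt (Real.sqrt_pos.2 (Fint_pos hf u hu))
  have hgInt := gInt hf
  set T : ℝ → ℝ := fun v => ∫ u in v..θ, g u with hT_def
  have Tθ : T θ = 0 := intervalIntegral.integral_same
  have Tnonneg : ∀ v ∈ Ioc (0:ℝ) θ, 0 ≤ T v := fun v hv =>
    intervalIntegral.integral_nonneg hv.2 (fun u _ => gnonneg u)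
  have hIntSub : ∀ v1 ∈ Ioc (0:ℝ) θ, ∀ v2 ∈ Ioc (0:ℝ) θ,
      IntervalIntegrable g volume v1 v2 := by
    intro v1 h1 v2 h2
    rcases le_total v1 v2 with h | h
    · apply (hgInt v1 h1).mono_set
      rw [uIcc_of_le h1.2, uIcc_of_le h]
      exact Icc_subset_Icc le_rfl h2.2
    · apply (hgInt v2 h2).mono_set
      rw [uIcc_of_le h2.2, uIcc_of_ge h]
      exact Icc_subset_Icc le_rfl h1.2
  have Tadd : ∀ v1 ∈ Ioc (0:ℝ) θ, ∀ v2 ∈ Ioc (0:ℝ) θ,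
      T v1 = (∫ u in v1..v2, g u) + T v2 := by
    intro v1 h1 v2 h2
    exact (intervalIntegral.integral_add_adjacent_intervals
      (hIntSub v1 h1 v2 h2) (hgInt v2 h2)).symm
  have Tanti : StrictAntiOn T (Ioc (0:ℝ) θ) := by
    intro v1 h1 v2 h2 hlt
    rw [Tadd v1 h1 v2 h2]
    have hpos : 0 < ∫ u in v1..v2, g u := by
      apply intervalIntegral.intervalIntegral_pos_of_pos_on (hIntSub v1 h1 v2 h2)
      · intro x hx
        exact gpos x ⟨h1.1.trans hx.1, lt_of_lt_of_le hx.2 h2.2⟩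
      · exact hlt
    linarith
  have Tanti' : AntitoneOn T (Ioc (0:ℝ) θ) := Tanti.antitoneOn
  -- continuity of T on closed subintervals
  have Tcont : ∀ v₀ ∈ Ioc (0:ℝ) θ, ContinuousOn T (Icc v₀ θ) := by
    intro v₀ hv₀
    have hint : IntegrableOn g (Icc v₀ θ) := by
      rw [← intervalIntegrable_iff_integrableOn_Icc_of_le hv₀.2]
      exact hgInt v₀ hv₀
    have hprim : ContinuousOn (fun v => ∫ u in v₀..v, g u) (Icc v₀ θ) := by
      have := intervalIntegral.continuousOn_primitive_interval
        (by rwa [uIcc_of_le hv₀.2] : IntegrableOn g (uIcc v₀ θ) volume)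
      rwa [uIcc_of_le hv₀.2] at this
    have heq : ∀ v ∈ Icc v₀ θ, T v = T v₀ - ∫ u in v₀..v, g u := by
      intro v hv
      have hvmem : v ∈ Ioc (0:ℝ) θ := ⟨lt_of_lt_of_le hv₀.1 hv.1, hv.2⟩
      have := Tadd v₀ hv₀ v hvmem
      linarith
    exact (ContinuousOn.sub continuousOn_const hprim).congr heq
  -- unboundedness of T near 0
  obtain ⟨C₀, hC₀⟩ := (isCompact_Icc (a := (0:ℝ)) (b := α)).exists_bound_of_continuousOn
    (hf.smooth.continuous_deriv le_rfl).continuousOn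
  set C : ℝ := C₀ + 1 with hC_def
  have hC₀0 : 0 ≤ C₀ := (norm_nonneg _).trans (hC₀ 0 ⟨le_rfl, hf.alpha_pos.le⟩)
  have hCpos : 0 < C := by linarith
  have hfs : ∀ s ∈ Icc (0:ℝ) α, |f s| ≤ C₀ * s := by
    intro s hs
    have := Convex.norm_image_sub_le_of_norm_deriv_le
      (fun x _ => (hf.smooth.differentiable one_ne_zero) x) hC₀
      (convex_Icc 0 α) (left_mem_Icc.2 hf.alpha_pos.le) hs
    rw [hf.f_zero, sub_zero, Real.norm_eq_abs, Real.norm_eq_abs, sub_zero,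
      abs_of_nonneg hs.1] at this
    exact this
  have hquad : ∀ u ∈ Ioc (0:ℝ) α, Fint f u ≤ C * u ^ 2 := by
    intro u hu
    have hmono : ∫ s in (0:ℝ)..u, -(C₀ * s) ≤ ∫ s in (0:ℝ)..u, f s := by
      apply intervalIntegral.integral_mono_on hu.1.le
        ((Continuous.intervalIntegrable (by continuity : Continuous fun s : ℝ => -(C₀ * s)) 0 u))
        (hf.smooth.continuous.intervalIntegrable 0 u)
      intro x hx
      have h := hfs x ⟨hx.1, hx.2.trans hu.2⟩
      have := abs_le.1 h
      linarith [this.1]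
    have hcomp : ∫ s in (0:ℝ)..u, -(C₀ * s) = -(C₀ * (u ^ 2 / 2)) := by
      rw [intervalIntegral.integral_neg, intervalIntegral.integral_const_mul, integral_id]
      ring
    rw [hcomp] at hmono
    have : Fint f u = -2 * ∫ s in (0:ℝ)..u, f s := rfl
    rw [this]
    nlinarith [sq_nonneg u]
  have hglow : ∀ v ∈ Ioc (0:ℝ) θ, v ≤ α → ∀ u ∈ Icc v α, (Real.sqrt C)⁻¹ * u⁻¹ ≤ g u := by
    intro v hv hvα u hu
    have hu0 : 0 < u := lt_of_lt_of_le hv.1 hu.1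
    have huα : u ≤ α := hu.2
    have hFu : Fint f u ≤ C * u ^ 2 := hquad u ⟨hu0, huα⟩
    have hsq : Real.sqrt (Fint f u) ≤ Real.sqrt C * u := by
      have h1 : Real.sqrt (Fint f u) ≤ Real.sqrt (C * u ^ 2) := Real.sqrt_le_sqrt hFu
      have h2 : Real.sqrt (C * u ^ 2) = Real.sqrt C * u := by
        rw [Real.sqrt_mul hCpos.le, Real.sqrt_sq hu0.le]
      linarith [h1, h2.le]
    have hFpos : 0 < Fint f u :=
      Fint_pos hf u ⟨hu0, lt_of_le_of_lt huα (hf.theta_gt)⟩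
    have hsqpos : 0 < Real.sqrt (Fint f u) := Real.sqrt_pos.2 hFpos
    have := inv_anti₀ hsqpos hsq
    rw [mul_inv] at this
    exact this
  have hαmem : α ∈ Ioc (0:ℝ) θ := ⟨hf.alpha_pos, hf.theta_gt.le⟩
  have hTbig : ∀ z : ℝ, ∃ v ∈ Ioc (0:ℝ) θ, z ≤ T v := by
    intro z
    set zp : ℝ := max z 0 with hzp_def
    have hzp0 : 0 ≤ zp := le_max_right _ _
    set x : ℝ := Real.sqrt C * zp + 1 with hx_def
    have hxpos : 0 < x := by
      have : 0 ≤ Real.sqrt C * zp := mul_nonneg (Real.sqrt_nonneg _) hzp0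
      linarith
    set v : ℝ := α * Real.exp (-x) with hv_def
    have hexp1 : Real.exp (-x) < 1 := Real.exp_lt_one_iff.2 (by linarith)
    have hvpos : 0 < v := mul_pos hf.alpha_pos (Real.exp_pos _)
    have hvα : v < α := by
      calc v = α * Real.exp (-x) := rfl
        _ < α * 1 := by exact mul_lt_mul_of_pos_left hexp1 hf.alpha_pos
        _ = α := mul_one α
    have hvmem : v ∈ Ioc (0:ℝ) θ := ⟨hvpos, (hvα.trans hf.theta_gt).le⟩
    refine ⟨v, hvmem, ?_⟩
    have h1 : T v = (∫ u in v..α, g u) + T α := Tadd v hvmem α hαmem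
    have h2 : 0 ≤ T α := Tnonneg α hαmem
    have h3 : ∫ u in v..α, (Real.sqrt C)⁻¹ * u⁻¹ ≤ ∫ u in v..α, g u := by
      apply intervalIntegral.integral_mono_on hvα.le
      · apply ContinuousOn.intervalIntegrable
        intro y hy
        rw [uIcc_of_le hvα.le] at hy
        have hy0 : 0 < y := lt_of_lt_of_le hvpos hy.1
        exact (continuousAt_const.mul (continuousAt_inv₀ (ne_of_gt hy0))).continuousWithinAt
      · exact hIntSub v hvmem α hαmem
      · exact hglow v hvmem hvα.le
    have h4 : ∫ u in v..α, (Real.sqrt C)⁻¹ * u⁻¹ = (Real.sqrt C)⁻¹ * Real.log (α / v) := by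
      rw [intervalIntegral.integral_const_mul, integral_inv]
      rw [uIcc_of_le hvα.le]
      intro h0
      exact absurd h0.1 (not_le.2 hvpos)
    have h5 : Real.log (α / v) = x := by
      have : α / v = Real.exp x := by
        rw [hv_def, Real.exp_neg]
        rw [div_eq_iff (ne_of_gt (mul_pos hf.alpha_pos (inv_pos.2 (Real.exp_pos x))))]
        field_simp
      rw [this, Real.log_exp]
    have hsC : 0 < Real.sqrt C := Real.sqrt_pos.2 hCpos
    have h6 : (Real.sqrt C)⁻¹ * x = zp + (Real.sqrt C)⁻¹ := by
      rw [hx_def]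
      field_simp
    have h7 : z ≤ zp + (Real.sqrt C)⁻¹ := by
      have : z ≤ zp := le_max_left _ _
      have : 0 ≤ (Real.sqrt C)⁻¹ := inv_nonneg.2 hsC.le
      linarith [le_max_left z 0]
    calc z ≤ zp + (Real.sqrt C)⁻¹ := h7
      _ = (Real.sqrt C)⁻¹ * Real.log (α / v) := by rw [h5, h6]
      _ ≤ ∫ u in v..α, g u := h4 ▸ h3
      _ ≤ T v := by linarith [h1, h2]
  have hsurj : ∀ z : ℝ, 0 ≤ z → ∃ v ∈ Ioc (0:ℝ) θ, T v = z := by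
    intro z hz
    obtain ⟨v₀, hv₀, hv₀big⟩ := hTbig z
    have hIVT := intermediate_value_Icc' hv₀.2 (Tcont v₀ hv₀)
    have hzmem : z ∈ Icc (T θ) (T v₀) := by
      rw [Tθ]; exact ⟨hz, hv₀big⟩
    obtain ⟨v, hvmem, hvT⟩ := hIVT hzmem
    exact ⟨v, ⟨lt_of_lt_of_le hv₀.1 hvmem.1, hvmem.2⟩, hvT⟩
  set Φ : ℝ → ℝ := fun z => if hz : 0 ≤ z then (hsurj z hz).choose else θ with hΦ_def
  have hΦ : ∀ z : ℝ, 0 ≤ z → Φ z ∈ Ioc (0:ℝ) θ ∧ T (Φ z) = z := by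
    intro z hz
    have h := (hsurj z hz).choose_spec
    simp only [hΦ_def, dif_pos hz]
    exact h
  have hΦθ : Φ 0 = θ := by
    obtain ⟨hmem, hT0⟩ := hΦ 0 le_rfl
    by_contra hne
    have hlt : Φ 0 < θ := lt_of_le_of_ne hmem.2 hne
    have := Tanti hmem hθmem hlt
    rw [Tθ, hT0] at this
    exact absurd this (lt_irrefl 0)
  have hΦanti : ∀ z1 z2 : ℝ, 0 ≤ z1 → z1 < z2 → Φ z2 < Φ z1 := by
    intro z1 z2 h1 hlt
    have h2 : (0:ℝ) ≤ z2 := h1.trans hlt.le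
    obtain ⟨m1, t1⟩ := hΦ z1 h1
    obtain ⟨m2, t2⟩ := hΦ z2 h2
    by_contra hc
    push_neg at hc
    have := Tanti' m1 m2 hc
    rw [t1, t2] at this
    linarith
  have hΦlt : ∀ z : ℝ, 0 < z → Φ z < θ := by
    intro z hz
    have := hΦanti 0 z le_rfl hz
    rwa [hΦθ] at this
  have hΦIoo : ∀ z : ℝ, 0 < z → Φ z ∈ Ioo (0:ℝ) θ := fun z hz =>
    ⟨(hΦ z hz.le).1.1, hΦlt z hz⟩
  set V : ℝ → ℝ := fun z => Φ |z| with hV_def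
  have heven : ∀ z, V (-z) = V z := by intro z; simp [hV_def, abs_neg]
  have hV0 : V 0 = θ := by simp [hV_def, hΦθ]
  have hVpos : ∀ z, 0 < V z := fun z => (hΦ |z| (abs_nonneg z)).1.1
  have hVle : ∀ z, V z ≤ θ := fun z => (hΦ |z| (abs_nonneg z)).1.2
  have hVIoo : ∀ z : ℝ, z ≠ 0 → V z ∈ Ioo (0:ℝ) θ := fun z hz =>
    hΦIoo |z| (abs_pos.2 hz)
  -- continuity of Φ at positive points
  have hΦcont : ∀ z₀ : ℝ, 0 < z₀ → ContinuousAt Φ z₀ := by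
    intro z₀ hz₀
    rw [Metric.continuousAt_iff]
    intro ε εpos
    obtain ⟨hm₀, ht₀⟩ := hΦ z₀ hz₀.le
    have hm₀' : Φ z₀ ∈ Ioo (0:ℝ) θ := hΦIoo z₀ hz₀
    set v₀ : ℝ := Φ z₀
    set vp : ℝ := min θ (v₀ + ε) with hvp_def
    set vm : ℝ := max (v₀ / 2) (v₀ - ε) with hvm_def
    have hvp1 : v₀ < vp := lt_min hm₀'.2 (by linarith)
    have hvpmem : vp ∈ Ioc (0:ℝ) θ := ⟨lt_trans hm₀'.1 hvp1, min_le_left _ _⟩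
    have hvm1 : vm < v₀ := max_lt (by linarith [hm₀'.1]) (by linarith)
    have hvmmem : vm ∈ Ioc (0:ℝ) θ := by
      constructor
      · exact lt_of_lt_of_le (by linarith [hm₀'.1] : (0:ℝ) < v₀ / 2) (le_max_left _ _)
      · linarith [hm₀'.2]
    have hTvp : T vp < z₀ := by
      have h := Tanti (hΦ z₀ hz₀.le).1 hvpmem hvp1
      rwa [ht₀] at h
    have hTvm : z₀ < T vm := by
      have h := Tanti hvmmem (hΦ z₀ hz₀.le).1 hvm1
      rwa [ht₀] at h
    refine ⟨min (z₀ - T vp) (T vm - z₀), by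
      apply lt_min <;> linarith, ?_⟩
    intro z hz
    rw [Real.dist_eq] at hz
    have hz1 : T vp < z := by
      have := abs_lt.1 hz
      have h2 := min_le_left (z₀ - T vp) (T vm - z₀)
      linarith [this.1]
    have hz2 : z < T vm := by
      have := abs_lt.1 hz
      have h2 := min_le_right (z₀ - T vp) (T vm - z₀)
      linarith [this.2]
    have hz0 : 0 ≤ z := le_trans (Tnonneg vp hvpmem) hz1.le
    obtain ⟨hzm, hzT⟩ := hΦ z hz0
    have hc1 : Φ z < vp := by
      by_contra hc
      push_neg at hc
      have := Tanti' hvpmem hzm hc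
      rw [hzT] at this
      linarith
    have hc2 : vm < Φ z := by
      by_contra hc
      push_neg at hc
      have := Tanti' hzm hvmmem hc
      rw [hzT] at this
      linarith
    rw [Real.dist_eq, abs_lt]
    constructor
    · have := le_max_right (v₀ / 2) (v₀ - ε)
      have : v₀ - ε ≤ vm := this
      linarith
    · have : vp ≤ v₀ + ε := min_le_right _ _
      linarith
  have hVcont0 : ContinuousAt V 0 := by
    rw [Metric.continuousAt_iff]
    intro ε εpos
    set vm : ℝ := max (θ / 2) (θ - ε) with hvm_def
    have hvm1 : vm < θ := max_lt (by linarith) (by linarith)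
    have hvmmem : vm ∈ Ioc (0:ℝ) θ :=
      ⟨lt_of_lt_of_le (by linarith : (0:ℝ) < θ / 2) (le_max_left _ _), hvm1.le⟩
    have hTvm : 0 < T vm := by
      have h := Tanti hvmmem hθmem hvm1
      rwa [Tθ] at h
    refine ⟨T vm, hTvm, ?_⟩
    intro z hz
    rw [Real.dist_eq, sub_zero] at hz
    obtain ⟨hzm, hzT⟩ := hΦ |z| (abs_nonneg z)
    have hc : vm < Φ |z| := by
      by_contra hc
      push_neg at hc
      have := Tanti' hzm hvmmem hc
      rw [hzT] at this
      linarith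
    rw [Real.dist_eq, hV0, abs_lt]
    have h1 : V z ≤ θ := hVle z
    have h2 : vm ≥ θ - ε := le_max_right _ _
    constructor
    · show -ε < V z - θ
      have : V z = Φ |z| := rfl
      linarith [hc]
    · linarith
  -- derivative of T
  have hTderiv : ∀ v ∈ Ioo (0:ℝ) θ, HasDerivAt T (-(g v)) v := by
    intro v hv
    exact intervalIntegral.integral_hasDerivAt_left
      (hgInt v ⟨hv.1, hv.2.le⟩)
      (gmeas.stronglyMeasurable.stronglyMeasurableAtFilter)
      (gcontAt v hv)
  -- derivative of Φ at positive points
  have hΦderiv : ∀ z : ℝ, 0 < z → HasDerivAt Φ (-Real.sqrt (Fint f (Φ z))) z := by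
    intro z hz
    have hm : Φ z ∈ Ioo (0:ℝ) θ := hΦIoo z hz
    have h1 := hTderiv (Φ z) hm
    have hgz : 0 < g (Φ z) := gpos _ hm
    have h2 : -(g (Φ z)) ≠ 0 := by linarith
    have h3 : ∀ᶠ y in nhds z, T (Φ y) = y := by
      filter_upwards [Ioi_mem_nhds hz] with y hy
      exact (hΦ y (le_of_lt (mem_Ioi.1 hy))).2
    have h4 := HasDerivAt.of_local_left_inverse (hΦcont z hz) h1 h2 h3
    have h5 : (-(g (Φ z)))⁻¹ = -Real.sqrt (Fint f (Φ z)) := by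
      simp only [hg_def, inv_neg, inv_inv]
    rwa [h5] at h4
  -- the candidate derivative function
  set Ψ : ℝ → ℝ := fun z =>
    if z < 0 then Real.sqrt (Fint f (V z)) else -Real.sqrt (Fint f (V z)) with hΨ_def
  have hΨ0 : Ψ 0 = 0 := by
    simp only [hΨ_def, lt_irrefl, if_false, hV0, hf.F_theta, Real.sqrt_zero, neg_zero]
  have hVd : ∀ z : ℝ, z ≠ 0 → HasDerivAt V (Ψ z) z := by
    intro z hz
    rcases lt_or_gt_of_ne hz with hneg | hpos
    · have habs : ∀ᶠ y in nhds z, (fun y => Φ (-y)) y = V y := by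
        filter_upwards [Iio_mem_nhds hneg] with y hy
        simp only [hV_def, abs_of_neg (mem_Iio.1 hy)]
      have hd := (hΦderiv (-z) (by linarith)).comp z (hasDerivAt_neg z)
      have habs' : V =ᶠ[nhds z] (fun y => Φ (-y)) := habs.mono (fun y h => h.symm)
      have hd2 := hd.congr_of_eventuallyEq habs'
      have hval : -Real.sqrt (Fint f (Φ (-z))) * (-1) = Ψ z := by
        simp only [hΨ_def, if_pos hneg, hV_def, abs_of_neg hneg]
        ring
      exact hval ▸ hd2
    · have habs' : V =ᶠ[nhds z] Φ := by
        filter_upwards [Ioi_mem_nhds hpos] with y hy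
        simp only [hV_def, abs_of_pos (mem_Ioi.1 hy)]
      have hd2 := (hΦderiv z hpos).congr_of_eventuallyEq habs'
      have hval : -Real.sqrt (Fint f (Φ z)) = Ψ z := by
        simp only [hΨ_def, if_neg (not_lt.2 hpos.le), hV_def, abs_of_pos hpos]
      exact hval ▸ hd2
  have hFV : ∀ z, 0 ≤ Fint f (V z) := fun z =>
    Fint_nonneg hf (V z) ⟨(hVpos z).le, hVle z⟩
  have hΨabs : ∀ z, |Ψ z| = Real.sqrt (Fint f (V z)) := by
    intro z
    by_cases h : z < 0
    · simp [hΨ_def, if_pos h, abs_of_nonneg (Real.sqrt_nonneg _)]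
    · simp [hΨ_def, if_neg h, abs_of_nonneg (Real.sqrt_nonneg _)]
  have hΨcont0 : ContinuousAt Ψ 0 := by
    have hcomp : ContinuousAt (fun z => Real.sqrt (Fint f (V z))) 0 :=
      Real.continuous_sqrt.continuousAt.comp
        ((continuous_Fint hf).continuousAt.comp hVcont0)
    have hval : Real.sqrt (Fint f (V 0)) = 0 := by
      rw [hV0, hf.F_theta, Real.sqrt_zero]
    have htend : Tendsto (fun z => Real.sqrt (Fint f (V z))) (nhds 0) (nhds 0) := by
      have := hcomp.tendsto
      rwa [hval] at this
    have : Tendsto Ψ (nhds 0) (nhds 0) := by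
      apply squeeze_zero_norm _ htend
      intro z
      rw [Real.norm_eq_abs, hΨabs z]
    rw [ContinuousAt, hΨ0]
    exact this
  have hVd0 : HasDerivAt V (Ψ 0) 0 :=
    hasDerivAt_of_hasDerivAt_of_ne hVd hVcont0 hΨcont0
  have hVd' : ∀ z : ℝ, HasDerivAt V (Ψ z) z := by
    intro z
    by_cases hz : z = 0
    · rw [hz]; exact hVd0
    · exact hVd z hz
  have hderivV : deriv V = Ψ := funext fun z => (hVd' z).deriv
  -- second derivative
  have hΨd : ∀ z : ℝ, z ≠ 0 → HasDerivAt Ψ (-f (V z)) z := by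
    intro z hz
    have hm : V z ∈ Ioo (0:ℝ) θ := hVIoo z hz
    have hFpos : 0 < Fint f (V z) := Fint_pos hf (V z) hm
    set s₀ : ℝ := Real.sqrt (Fint f (V z)) with hs₀_def
    have hs₀pos : 0 < s₀ := Real.sqrt_pos.2 hFpos
    have hFVd : HasDerivAt (fun y => Fint f (V y)) (-2 * f (V z) * Ψ z) z :=
      (hasDerivAt_Fint hf (V z)).comp z (hVd' z)
    have hs := (Real.hasDerivAt_sqrt (ne_of_gt hFpos)).comp z hFVd
    rcases lt_or_gt_of_ne hz with hneg | hpos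
    · have habs' : Ψ =ᶠ[nhds z] (fun y => Real.sqrt (Fint f (V y))) := by
        filter_upwards [Iio_mem_nhds hneg] with y hy
        simp only [hΨ_def, if_pos (mem_Iio.1 hy)]
      have hΨz : Ψ z = s₀ := by simp only [hΨ_def, if_pos hneg, hs₀_def]
      have hd2 := hs.congr_of_eventuallyEq habs'
      refine hd2.congr_deriv ?_
      rw [hΨz]
      field_simp
      ring
    · have habs' : Ψ =ᶠ[nhds z] (fun y => -Real.sqrt (Fint f (V y))) := by
        filter_upwards [Ioi_mem_nhds hpos] with y hy
        simp only [hΨ_def, if_neg (not_lt.2 (mem_Ioi.1 hy).le)]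
      have hΨz : Ψ z = -s₀ := by
        simp only [hΨ_def, if_neg (not_lt.2 hpos.le), hs₀_def]
      have hd2 := hs.neg.congr_of_eventuallyEq habs'
      refine hd2.congr_deriv ?_
      rw [hΨz]
      field_simp
      ring
  have hΨd0 : HasDerivAt Ψ (-f (V 0)) 0 := by
    have hcont : ContinuousAt (fun z => -f (V z)) 0 := by
      have hVc : ContinuousAt V 0 := hVcont0
      exact (hf.smooth.continuous.continuousAt.comp hVc).neg
    exact hasDerivAt_of_hasDerivAt_of_ne hΨd hΨcont0 hcont
  have hΨd' : ∀ z : ℝ, HasDerivAt Ψ (-f (V z)) z := by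
    intro z
    by_cases hz : z = 0
    · rw [hz]; exact hΨd0
    · exact hΨd z hz
  have hODE : ∀ z, deriv (deriv V) z + f (V z) = 0 := by
    intro z
    rw [hderivV, (hΨd' z).deriv]
    ring
  -- smoothness
  have hVdiff : Differentiable ℝ V := fun z => (hVd' z).differentiableAt
  have hΨdiff : Differentiable ℝ Ψ := fun z => (hΨd' z).differentiableAt
  have hΨC1 : ContDiff ℝ 1 Ψ := by
    rw [contDiff_one_iff_deriv]
    refine ⟨hΨdiff, ?_⟩
    have : deriv Ψ = fun z => -f (V z) := funext fun z => (hΨd' z).deriv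
    rw [this]
    exact (hf.smooth.continuous.comp hVdiff.continuous).neg
  have hVC2 : ContDiff ℝ 2 V := by
    have h2 : ContDiff ℝ ((1 : WithTop ℕ∞) + 1) V := by
      rw [contDiff_succ_iff_deriv]
      refine ⟨hVdiff, by simp, ?_⟩
      rw [hderivV]
      exact hΨC1
    convert h2 using 2; norm_num
  -- limits
  have hTop : Tendsto V atTop (nhds 0) := by
    rw [Metric.tendsto_atTop]
    intro ε εpos
    set vε : ℝ := min (ε / 2) (θ / 2) with hvε_def
    have hvεpos : 0 < vε := lt_min (by linarith) (by linarith)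
    have hvεmem : vε ∈ Ioc (0:ℝ) θ := ⟨hvεpos, (min_le_right _ _).trans (by linarith)⟩
    refine ⟨T vε + 1, ?_⟩
    intro z hz
    have hTvε : 0 ≤ T vε := Tnonneg vε hvεmem
    have hz0 : 0 ≤ z := by linarith
    have hzabs : |z| = z := abs_of_nonneg hz0
    obtain ⟨hm, hT⟩ := hΦ |z| (abs_nonneg z)
    have hc : Φ |z| < vε := by
      by_contra hc
      push_neg at hc
      have := Tanti' hvεmem hm hc
      rw [hT, hzabs] at this
      linarith
    rw [Real.dist_eq, sub_zero]
    have : 0 < V z := hVpos z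
    rw [abs_of_pos this]
    calc V z = Φ |z| := rfl
      _ < vε := hc
      _ ≤ ε / 2 := min_le_left _ _
      _ < ε := by linarith
  have hBot : Tendsto V atBot (nhds 0) := by
    have := hTop.comp tendsto_neg_atBot_atTop
    exact this.congr (fun z => heven z)
  have hanti : StrictAntiOn V (Set.Ici 0) := by
    intro z1 h1 z2 h2 hlt
    have e1 : V z1 = Φ z1 := by simp [hV_def, abs_of_nonneg (mem_Ici.1 h1)]
    have e2 : V z2 = Φ z2 := by simp [hV_def, abs_of_nonneg (mem_Ici.1 h2)]
    rw [e1, e2]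
    exact hΦanti z1 z2 (mem_Ici.1 h1) hlt
  exact ⟨V, ⟨hVC2, hVpos, hODE, hV0, by rw [hderivV]; exact hΨ0, hTop, hBot⟩, heven, hanti⟩

end Helpers

theorem stmt0 (f : ℝ → ℝ) (α θ lam : ℝ) (hf : CondF f α θ lam) :
    ∃ V : ℝ → ℝ,
      (ContDiff ℝ 2 V ∧ (∀ z, 0 < V z) ∧ (∀ z, deriv (deriv V) z + f (V z) = 0) ∧
        V 0 = θ ∧ deriv V 0 = 0 ∧
        Filter.Tendsto V Filter.atTop (nhds 0) ∧ Filter.Tendsto V Filter.atBot (nhds 0)) ∧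
      (∀ W : ℝ → ℝ,
        (ContDiff ℝ 2 W ∧ (∀ z, 0 < W z) ∧ (∀ z, deriv (deriv W) z + f (W z) = 0) ∧
          W 0 = θ ∧ deriv W 0 = 0 ∧
          Filter.Tendsto W Filter.atTop (nhds 0) ∧ Filter.Tendsto W Filter.atBot (nhds 0)) →
        W = V) ∧
      (∀ z, V (-z) = V z) ∧ StrictAntiOn V (Set.Ici 0) ∧
      (∀ z, (deriv V z) ^ 2 = Fint f (V z)) := by
  obtain ⟨V, hV, heven, hanti⟩ := exist hf
  exact ⟨V, hV, fun W hW => uniq hf hW hV, heven, hanti, fun z => hV.energy hf z⟩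
end

section
/- Let λ > 0, c > 0, ν > 0, C ≥ 0 and let y : [0,∞) → ℝ be a C¹ function with y(t) → ∞ as t → ∞ and |y'(t) − c·e^{−2λ·y(t)}| ≤ C·( e^{−3λ·y(t)} + e^{−2νt} ) for all t ≥ 0. Then there exist T > 0 and C' > 0 such that for all t ≥ T: | y(t) − (1/(2λ))·ln(2λ·c·t) | ≤ C'·t^{−1/2} and | y'(t) − 1/(2λ·t) | ≤ C'·t^{−3/2}. -/
open Set Filter

private lemma monoAux19 {f f' : ℝ → ℝ} {T : ℝ} (hc : ContinuousOn f (Ici T))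
    (hd : ∀ t ∈ Ioi T, HasDerivAt f (f' t) t) (h0 : ∀ t ∈ Ioi T, 0 ≤ f' t) :
    MonotoneOn f (Ici T) := by
  apply monotoneOn_of_deriv_nonneg (convex_Ici T) hc
  · rw [interior_Ici]
    exact fun t ht => (hd t ht).differentiableAt.differentiableWithinAt
  · rw [interior_Ici]
    intro t ht
    rw [(hd t ht).deriv]
    exact h0 t ht

private lemma hasDerivAt_const_mul_id (k s : ℝ) : HasDerivAt (fun x : ℝ => k * x) k s := by
  simpa using (hasDerivAt_id s).const_mul k

set_option maxHeartbeats 1600000 in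
theorem stmt19 (lam c ν C : ℝ) (hlam : 0 < lam) (hc : 0 < c) (hν : 0 < ν) (hC : 0 ≤ C)
    (y : ℝ → ℝ) (hy : ContDiffOn ℝ 1 y (Set.Ici 0))
    (hlim : Filter.Tendsto y Filter.atTop Filter.atTop)
    (hode : ∀ t ≥ (0:ℝ), |deriv y t - c * Real.exp (-2 * lam * y t)| ≤
      C * (Real.exp (-3 * lam * y t) + Real.exp (-2 * ν * t))) :
    ∃ T > (0:ℝ), ∃ C' > (0:ℝ), ∀ t ≥ T,
      |y t - (1 / (2 * lam)) * Real.log (2 * lam * c * t)| ≤ C' * t ^ (-(1:ℝ) / 2) ∧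
      |deriv y t - 1 / (2 * lam * t)| ≤ C' * t ^ (-(3:ℝ) / 2) := by
  -- basic differentiability facts
  have hyd : ∀ t : ℝ, 0 < t → HasDerivAt y (deriv y t) t := fun t ht =>
    ((hy.contDiffAt (Ici_mem_nhds ht)).differentiableAt one_ne_zero).hasDerivAt
  have hycont : ContinuousOn y (Ici 0) := hy.continuousOn
  set u : ℝ → ℝ := fun s => Real.exp (2*lam*y s) with hu_def
  have hupos : ∀ s, 0 < u s := fun s => Real.exp_pos _
  have hucont : ∀ T : ℝ, 0 ≤ T → ContinuousOn u (Ici T) := fun T hT =>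
    Real.continuous_exp.comp_continuousOn
      (continuousOn_const.mul (hycont.mono (Ici_subset_Ici.2 hT)))
  have hud : ∀ t : ℝ, 0 < t → HasDerivAt u (u t * (2*lam*deriv y t)) t := fun t ht =>
    ((hyd t ht).const_mul (2*lam)).exp
  -- exponential identities
  have hinv : ∀ t, u t * Real.exp (-2*lam*y t) = 1 := by
    intro t
    simp only [hu_def]
    rw [← Real.exp_add, show 2*lam*y t + -2*lam*y t = 0 by ring, Real.exp_zero]
  have hu3 : ∀ t, u t * Real.exp (-3*lam*y t) = Real.exp (-lam*y t) := by
    intro t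
    simp only [hu_def]
    rw [← Real.exp_add, show 2*lam*y t + -3*lam*y t = -lam*y t by ring]
  -- the ODE bound in terms of u
  have hodeu : ∀ t ≥ (0:ℝ), |u t * (2*lam*deriv y t) - 2*lam*c| ≤
      2*lam*C*(Real.exp (-lam*y t) + u t * Real.exp (-2*ν*t)) := by
    intro t ht
    have h0 := hode t ht
    have e1 : u t * (2*lam*deriv y t) - 2*lam*c =
        (2*lam*u t) * (deriv y t - c*Real.exp (-2*lam*y t)) := by
      have h2 : (2*lam*u t) * (deriv y t - c*Real.exp (-2*lam*y t)) =
          u t * (2*lam*deriv y t) - 2*lam*c*(u t * Real.exp (-2*lam*y t)) := by ring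
      rw [h2, hinv t, mul_one]
    rw [e1, abs_mul, abs_of_pos (show (0:ℝ) < 2*lam*u t by positivity)]
    calc 2*lam*u t * |deriv y t - c*Real.exp (-2*lam*y t)|
        ≤ 2*lam*u t * (C * (Real.exp (-3*lam*y t) + Real.exp (-2*ν*t))) := by
          have h3 : |deriv y t - c*Real.exp (-2*lam*y t)| ≤
              C * (Real.exp (-3*lam*y t) + Real.exp (-2*ν*t)) := by
            convert h0 using 3 <;> ring
          exact mul_le_mul_of_nonneg_left h3 (by positivity)
      _ = 2*lam*C*(Real.exp (-lam*y t) + u t * Real.exp (-2*ν*t)) := by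
          linear_combination (2*lam*C) * (hu3 t)
  -- tendsto facts
  have ht2 : Tendsto (fun t => Real.exp (-2*lam*y t)) atTop (nhds 0) := by
    have h1 : Tendsto (fun t => -2*lam*(y t)) atTop atBot :=
      hlim.const_mul_atTop_of_neg (by linarith)
    have := Real.tendsto_exp_atBot.comp h1
    simpa [Function.comp_def, mul_assoc] using this
  have ht3 : Tendsto (fun t => Real.exp (-3*lam*y t)) atTop (nhds 0) := by
    have h1 : Tendsto (fun t => -3*lam*(y t)) atTop atBot :=
      hlim.const_mul_atTop_of_neg (by linarith)
    have := Real.tendsto_exp_atBot.comp h1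
    simpa [Function.comp_def, mul_assoc] using this
  have htν : ∀ b : ℝ, 0 < b → Tendsto (fun t : ℝ => Real.exp (-b*t)) atTop (nhds 0) := by
    intro b hb
    have h1 : Tendsto (fun t : ℝ => -b*t) atTop atBot :=
      tendsto_id.const_mul_atTop_of_neg (by linarith)
    have := Real.tendsto_exp_atBot.comp h1
    simpa [Function.comp_def] using this
  have hsum : Tendsto (fun t => c * Real.exp (-2*lam*y t) + C * Real.exp (-3*lam*y t)
      + C * Real.exp (-2*ν*t)) atTop (nhds 0) := by
    have := ((ht2.const_mul c).add (ht3.const_mul C)).add ((htν (2*ν) (by linarith)).const_mul C)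
    simpa using this
  -- eventually small derivative
  have hDsmall : ∀ᶠ t in atTop, deriv y t ≤ ν/(4*lam) := by
    filter_upwards [hsum.eventually_lt_const (show (0:ℝ) < ν/(4*lam) by positivity),
      eventually_ge_atTop (0:ℝ)] with t h1 h2
    have h3 := (abs_le.1 (hode t h2)).2
    have h4 : C * (Real.exp (-3*lam*y t) + Real.exp (-2*ν*t)) =
        C * Real.exp (-3*lam*y t) + C * Real.exp (-2*ν*t) := by ring
    nlinarith [Real.exp_pos (-2*lam*y t)]
  obtain ⟨Ta0, hTa0⟩ := eventually_atTop.1 (hDsmall.and (eventually_ge_atTop (1:ℝ)))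
  set Ta : ℝ := max Ta0 1 with hTa_def
  have hTa1 : (1:ℝ) ≤ Ta := le_max_right _ _
  have hTaP : ∀ t ≥ Ta, deriv y t ≤ ν/(4*lam) :=
    fun t ht => (hTa0 t (le_trans (le_max_left _ _) ht)).1
  -- linear growth bound
  have hlin : ∀ t ≥ Ta, y t ≤ y Ta + (ν/(4*lam)) * (t - Ta) := by
    intro t ht
    have hmono : MonotoneOn (fun s => (ν/(4*lam)) * s - y s) (Ici Ta) := by
      apply monoAux19 (f' := fun s => (ν/(4*lam)) - deriv y s)
      · exact (continuousOn_const.mul continuousOn_id).sub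
          (hycont.mono (Ici_subset_Ici.2 (by linarith)))
      · intro s hs
        exact (hasDerivAt_const_mul_id _ s).sub (hyd s (by have := hs.out; linarith))
      · intro s hs
        have := hTaP s (le_of_lt hs.out)
        linarith
    have := hmono (self_mem_Ici) (mem_Ici.2 ht) ht
    simp only at this
    linarith
  -- sublinearity
  set Tb : ℝ := max Ta ((4*lam/ν) * |y Ta| + 1) with hTb_def
  have hsub : ∀ t ≥ Tb, y t ≤ (ν/(2*lam)) * t := by
    intro t ht
    have h1 : y t ≤ y Ta + (ν/(4*lam)) * (t - Ta) := hlin t (le_trans (le_max_left _ _) ht)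
    have h2 : (4*lam/ν) * |y Ta| + 1 ≤ t := le_trans (le_max_right _ _) ht
    have h3 : (ν/(4*lam)) * ((4*lam/ν) * |y Ta| + 1) ≤ (ν/(4*lam)) * t :=
      mul_le_mul_of_nonneg_left h2 (by positivity)
    have h4 : (ν/(4*lam)) * ((4*lam/ν) * |y Ta| + 1) = |y Ta| + ν/(4*lam) := by
      field_simp
    have h5 : y Ta ≤ |y Ta| := le_abs_self _
    have h6 : 0 ≤ (ν/(4*lam)) * Ta := by positivity
    have h7 : (ν/(4*lam)) * t + (ν/(4*lam)) * t = (ν/(2*lam)) * t := by ring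
    nlinarith [mul_le_mul_of_nonneg_left hTa1 (show (0:ℝ) ≤ ν/(4*lam) by positivity)]
  -- threshold for exp(-lam y) small
  set M : ℝ := (1/lam) * Real.log ((4*(C+1))/c) with hM_def
  have hM : ∀ t : ℝ, M ≤ y t → C * Real.exp (-lam * y t) ≤ c/4 := by
    intro t h
    have h1 : Real.exp (-lam * y t) ≤ Real.exp (-lam * M) :=
      Real.exp_le_exp.2 (by nlinarith)
    have h2 : Real.exp (-lam * M) = c/(4*(C+1)) := by
      rw [hM_def, show -lam * ((1/lam) * Real.log ((4*(C+1))/c)) =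
        -Real.log ((4*(C+1))/c) by field_simp]
      rw [Real.exp_neg, Real.exp_log (by positivity), inv_div]
    have h3 : (C+1) * (c/(4*(C+1))) = c/4 := by
      field_simp
    calc C * Real.exp (-lam * y t) ≤ C * (c/(4*(C+1))) :=
          mul_le_mul_of_nonneg_left (h1.trans_eq h2) hC
      _ ≤ (C+1) * (c/(4*(C+1))) :=
          mul_le_mul_of_nonneg_right (by linarith) (by positivity)
      _ = c/4 := h3
  have hνs : ∀ᶠ t in atTop, C * Real.exp (-ν*t) ≤ c/4 := by
    have h0 := (htν ν hν).const_mul C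
    rw [mul_zero] at h0
    exact h0.eventually_le_const (by positivity)
  -- assemble T1
  obtain ⟨T10, hT10⟩ := eventually_atTop.1 (((hlim.eventually_ge_atTop M).and
    ((hlim.eventually_ge_atTop 0).and (hνs.and (eventually_ge_atTop Tb)))))
  set T1 : ℝ := max T10 Ta with hT1_def
  have hT1ge1 : (1:ℝ) ≤ T1 := le_trans hTa1 (le_max_right _ _)
  have hT1pos : (0:ℝ) < T1 := lt_of_lt_of_le one_pos hT1ge1
  -- Step A: two-sided bounds on deriv y
  have hA : ∀ t ≥ T1, c/2 * Real.exp (-2*lam*y t) ≤ deriv y t ∧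
      deriv y t ≤ (3*c/2) * Real.exp (-2*lam*y t) := by
    intro t ht
    obtain ⟨h1, h2, h3, h4⟩ := hT10 t (le_trans (le_max_left _ _) ht)
    have htpos : (0:ℝ) < t := lt_of_lt_of_le hT1pos ht
    have habs := abs_le.1 (hode t htpos.le)
    have e3 : C * Real.exp (-3*lam*y t) ≤ c/4 * Real.exp (-2*lam*y t) := by
      have hMle := hM t h1
      have hsplit : Real.exp (-3*lam*y t) = Real.exp (-lam*y t) * Real.exp (-2*lam*y t) := by
        rw [← Real.exp_add]
        ring_nf
      rw [hsplit]
      have := Real.exp_pos (-2*lam*y t)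
      nlinarith
    have eν : C * Real.exp (-2*ν*t) ≤ c/4 * Real.exp (-2*lam*y t) := by
      have hy2 : y t ≤ (ν/(2*lam)) * t := hsub t h4
      have hcan : 2*lam*((ν/(2*lam))*t) = ν*t := by field_simp
      have h9 : Real.exp (-ν*t) ≤ Real.exp (-2*lam*y t) := by
        apply Real.exp_le_exp.2
        nlinarith [mul_le_mul_of_nonneg_left hy2 (show (0:ℝ) ≤ 2*lam by linarith)]
      have hsplit : Real.exp (-2*ν*t) = Real.exp (-ν*t) * Real.exp (-ν*t) := by
        rw [← Real.exp_add]
        ring_nf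
      rw [hsplit]
      calc C * (Real.exp (-ν*t) * Real.exp (-ν*t))
          = (C * Real.exp (-ν*t)) * Real.exp (-ν*t) := by ring
        _ ≤ (c/4) * Real.exp (-ν*t) :=
            mul_le_mul_of_nonneg_right h3 (Real.exp_pos _).le
        _ ≤ c/4 * Real.exp (-2*lam*y t) :=
            mul_le_mul_of_nonneg_left h9 (by positivity)
    have hexpand : C * (Real.exp (-3*lam*y t) + Real.exp (-2*ν*t)) =
        C * Real.exp (-3*lam*y t) + C * Real.exp (-2*ν*t) := by ring
    constructor
    · nlinarith [habs.1]
    · nlinarith [habs.2]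
  -- Step B: bounds on u' and linear bounds on u
  have hB1 : ∀ t ≥ T1, lam*c ≤ u t * (2*lam*deriv y t) := by
    intro t ht
    have h1 := (hA t ht).1
    calc lam*c = 2*lam*(u t*Real.exp (-2*lam*y t))*(c/2) := by rw [hinv t]; ring
      _ = 2*lam*u t*(c/2*Real.exp (-2*lam*y t)) := by ring
      _ ≤ 2*lam*u t * deriv y t := mul_le_mul_of_nonneg_left h1 (by positivity)
      _ = u t * (2*lam*deriv y t) := by ring
  have hB2 : ∀ t ≥ T1, u t * (2*lam*deriv y t) ≤ 3*lam*c := by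
    intro t ht
    have h1 := (hA t ht).2
    calc u t * (2*lam*deriv y t) = 2*lam*u t * deriv y t := by ring
      _ ≤ 2*lam*u t * (3*c/2*Real.exp (-2*lam*y t)) := mul_le_mul_of_nonneg_left h1 (by positivity)
      _ = 3*lam*c*(u t*Real.exp (-2*lam*y t)) := by ring
      _ = 3*lam*c := by rw [hinv t]; ring
  have hulow : ∀ t ≥ T1, u T1 + lam*c*(t - T1) ≤ u t := by
    intro t ht
    have hmono : MonotoneOn (fun s => u s - lam*c*s) (Ici T1) := by
      apply monoAux19 (f' := fun s => u s * (2*lam*deriv y s) - lam*c)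
      · exact (hucont T1 hT1pos.le).sub (continuousOn_const.mul continuousOn_id)
      · intro s hs
        exact (hud s (lt_trans hT1pos hs.out)).sub (hasDerivAt_const_mul_id _ s)
      · intro s hs
        have := hB1 s hs.out.le
        linarith
    have := hmono (self_mem_Ici) (mem_Ici.2 ht) ht
    simp only at this
    linarith
  have huup : ∀ t ≥ T1, u t ≤ u T1 + 3*lam*c*(t - T1) := by
    intro t ht
    have hmono : MonotoneOn (fun s => 3*lam*c*s - u s) (Ici T1) := by
      apply monoAux19 (f' := fun s => 3*lam*c - u s * (2*lam*deriv y s))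
      · exact (continuousOn_const.mul continuousOn_id).sub (hucont T1 hT1pos.le)
      · intro s hs
        exact (hasDerivAt_const_mul_id _ s).sub (hud s (lt_trans hT1pos hs.out))
      · intro s hs
        have := hB2 s hs.out.le
        linarith
    have := hmono (self_mem_Ici) (mem_Ici.2 ht) ht
    simp only at this
    linarith
  set K3 : ℝ := u T1 + 3*lam*c with hK3_def
  have hK3pos : 0 < K3 := by have := hupos T1; positivity
  have huupK : ∀ t ≥ T1, u t ≤ K3 * t := by
    intro t ht
    have h1 := huup t ht
    have h2 : (1:ℝ) ≤ t := le_trans hT1ge1 ht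
    have h3 := hupos T1
    have h4 : u T1 * 1 ≤ u T1 * t := mul_le_mul_of_nonneg_left h2 h3.le
    have h5 : 0 ≤ 3*lam*c*T1 := by positivity
    rw [hK3_def]
    linarith [h1, h4, h5]
  have hulow2 : ∀ t ≥ 2*T1, lam*c/2 * t ≤ u t := by
    intro t ht
    have h1 := hulow t (by linarith)
    have h2 := hupos T1
    have h4 : (lam*c/2)*(2*T1) ≤ (lam*c/2)*t := mul_le_mul_of_nonneg_left ht (by positivity)
    linarith [h1, h2, h4]
  -- Step C: pointwise bound |u' - 2 lam c| ≤ K5/√t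
  have hexpbd : ∀ t ≥ 2*T1, Real.exp (-lam*y t) ≤ Real.sqrt (2/(lam*c)) / Real.sqrt t := by
    intro t ht
    have htpos : (0:ℝ) < t := by linarith
    have hut := hupos t
    have h1 : Real.exp (-2*lam*y t) ≤ 2/(lam*c) / t := by
      have h2 := hulow2 t ht
      have he2 : Real.exp (-2*lam*y t) = 1 / u t := by
        rw [eq_div_iff hut.ne']
        linear_combination hinv t
      rw [he2, div_div, div_le_div_iff₀ hut (by positivity)]
      linarith [h2]
    have h4 : Real.exp (-lam*y t) = Real.sqrt (Real.exp (-2*lam*y t)) := by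
      rw [show -2*lam*y t = -lam*y t + -lam*y t by ring, Real.exp_add,
        Real.sqrt_mul_self (Real.exp_nonneg _)]
    rw [h4]
    exact (Real.sqrt_le_sqrt h1).trans (le_of_eq (Real.sqrt_div (by positivity) t))
  have hcube : Tendsto (fun t : ℝ => t^2 * Real.exp (-(2*ν*t))) atTop (nhds 0) := by
    have h0 : Tendsto (fun t : ℝ => 2*ν*t) atTop atTop :=
      tendsto_id.const_mul_atTop (by positivity)
    have h1 := (Real.tendsto_pow_mul_exp_neg_atTop_nhds_zero 2).comp h0
    have h2 := h1.const_mul (1/(2*ν)^2)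
    rw [mul_zero] at h2
    refine h2.congr fun t => ?_
    simp only [Function.comp_apply]
    field_simp
  have hEv : ∀ᶠ (t:ℝ) in atTop, K3 * (t * Real.exp (-2*ν*t)) ≤ 1/Real.sqrt t := by
    have h2 := hcube.const_mul K3
    rw [mul_zero] at h2
    filter_upwards [h2.eventually_le_const (show (0:ℝ) < 1 by norm_num),
      eventually_ge_atTop (1:ℝ)] with t h1 ht1
    have htpos : (0:ℝ) < t := by linarith
    have htt : t ≤ t^2 := by
      have := mul_le_mul_of_nonneg_left ht1 htpos.le
      linarith [this]
    have hst : Real.sqrt t ≤ t := (Real.sqrt_le_left (by linarith)).2 htt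
    have hstpos : 0 < Real.sqrt t := Real.sqrt_pos.2 htpos
    rw [le_div_iff₀ hstpos]
    calc K3 * (t * Real.exp (-2*ν*t)) * Real.sqrt t
        ≤ K3 * (t * Real.exp (-2*ν*t)) * t :=
          mul_le_mul_of_nonneg_left hst
            (mul_nonneg hK3pos.le (mul_nonneg htpos.le (Real.exp_nonneg _)))
      _ = K3 * (t^2 * Real.exp (-(2*ν*t))) := by ring_nf
      _ ≤ 1 := h1
  obtain ⟨T20, hT20⟩ := eventually_atTop.1 hEv
  set T2 : ℝ := max T20 (2*T1) with hT2_def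
  have hT2ge : 2*T1 ≤ T2 := le_max_right _ _
  have hT2pos : 0 < T2 := by linarith
  set K5 : ℝ := 2*lam*C*(Real.sqrt (2/(lam*c)) + 1) + 1 with hK5_def
  have hK5pos : 0 < K5 := by positivity
  have hC5 : ∀ t ≥ T2, |u t * (2*lam*deriv y t) - 2*lam*c| ≤ K5 / Real.sqrt t := by
    intro t ht
    have ht2T1 : 2*T1 ≤ t := le_trans hT2ge ht
    have htpos : (0:ℝ) < t := by linarith
    have hstpos : 0 < Real.sqrt t := Real.sqrt_pos.2 htpos
    have h0 := hodeu t htpos.le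
    have h1 := hexpbd t ht2T1
    have h2 : u t * Real.exp (-2*ν*t) ≤ 1/Real.sqrt t := by
      have h3 := hT20 t (le_trans (le_max_left _ _) ht)
      have h4 : u t * Real.exp (-2*ν*t) ≤ K3 * t * Real.exp (-2*ν*t) :=
        mul_le_mul_of_nonneg_right (huupK t (by linarith)) (Real.exp_nonneg _)
      calc u t * Real.exp (-2*ν*t) ≤ K3 * t * Real.exp (-2*ν*t) := h4
        _ = K3 * (t * Real.exp (-2*ν*t)) := by ring
        _ ≤ 1/Real.sqrt t := h3
    calc |u t * (2*lam*deriv y t) - 2*lam*c|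
        ≤ 2*lam*C*(Real.exp (-lam*y t) + u t * Real.exp (-2*ν*t)) := h0
      _ ≤ 2*lam*C*(Real.sqrt (2/(lam*c))/Real.sqrt t + 1/Real.sqrt t) := by
          apply mul_le_mul_of_nonneg_left (add_le_add h1 h2) (by positivity)
      _ = (2*lam*C*(Real.sqrt (2/(lam*c)) + 1))/Real.sqrt t := by
          field_simp
      _ ≤ K5/Real.sqrt t := by
          apply div_le_div_of_nonneg_right ?_ hstpos.le
          · rw [hK5_def]; linarith
  -- Step D: |u t - 2 lam c t| ≤ K6 √t
  have hgd : ∀ t : ℝ, 0 < t → HasDerivAt (fun s => 2*K5*Real.sqrt s) (K5/Real.sqrt t) t := by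
    intro t ht
    have h1 := (Real.hasDerivAt_sqrt ht.ne').const_mul (2*K5)
    have h2 : 2*K5*(1/(2*Real.sqrt t)) = K5/Real.sqrt t := by
      have := Real.sqrt_pos.2 ht
      field_simp
    rw [h2] at h1
    exact h1
  have hsqcont : ContinuousOn (fun s : ℝ => 2*K5*Real.sqrt s) (Ici T2) :=
    continuousOn_const.mul (Real.continuous_sqrt.continuousOn)
  have hmono1 : MonotoneOn (fun s => 2*K5*Real.sqrt s - (u s - 2*lam*c*s)) (Ici T2) := by
    apply monoAux19 (f' := fun s => K5/Real.sqrt s - (u s * (2*lam*deriv y s) - 2*lam*c))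
    · exact hsqcont.sub ((hucont T2 hT2pos.le).sub (continuousOn_const.mul continuousOn_id))
    · intro s hs
      have hspos : (0:ℝ) < s := lt_trans hT2pos hs.out
      exact (hgd s hspos).sub ((hud s hspos).sub (hasDerivAt_const_mul_id _ s))
    · intro s hs
      have := (abs_le.1 (hC5 s hs.out.le)).2
      linarith
  have hmono2 : MonotoneOn (fun s => 2*K5*Real.sqrt s + (u s - 2*lam*c*s)) (Ici T2) := by
    apply monoAux19 (f' := fun s => K5/Real.sqrt s + (u s * (2*lam*deriv y s) - 2*lam*c))
    · exact hsqcont.add ((hucont T2 hT2pos.le).sub (continuousOn_const.mul continuousOn_id))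
    · intro s hs
      have hspos : (0:ℝ) < s := lt_trans hT2pos hs.out
      exact (hgd s hspos).add ((hud s hspos).sub (hasDerivAt_const_mul_id _ s))
    · intro s hs
      have := (abs_le.1 (hC5 s hs.out.le)).1
      linarith
  set K6 : ℝ := |u T2 - 2*lam*c*T2| + 2*K5 + 1 with hK6_def
  have hK6pos : 0 < K6 := by positivity
  have hT2one : (1:ℝ) ≤ T2 := by linarith [hT1ge1, hT2ge]
  have hD : ∀ t ≥ T2, |u t - 2*lam*c*t| ≤ K6 * Real.sqrt t := by
    intro t ht
    have h1 := hmono1 (self_mem_Ici) (mem_Ici.2 ht) ht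
    have h2 := hmono2 (self_mem_Ici) (mem_Ici.2 ht) ht
    simp only at h1 h2
    have hs2 : Real.sqrt T2 ≤ Real.sqrt t := Real.sqrt_le_sqrt ht
    have hs1 : (1:ℝ) ≤ Real.sqrt t := by
      rw [show (1:ℝ) = Real.sqrt 1 by rw [Real.sqrt_one]]
      exact Real.sqrt_le_sqrt (le_trans hT2one ht)
    have habs1 := le_abs_self (u T2 - 2*lam*c*T2)
    have habs2 := neg_abs_le (u T2 - 2*lam*c*T2)
    have habs0 := abs_nonneg (u T2 - 2*lam*c*T2)
    have hmul : |u T2 - 2*lam*c*T2| * 1 ≤ |u T2 - 2*lam*c*T2| * Real.sqrt t :=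
      mul_le_mul_of_nonneg_left hs1 habs0
    have hsT2 : 0 ≤ Real.sqrt T2 := Real.sqrt_nonneg _
    rw [abs_le]
    constructor
    · rw [hK6_def]
      nlinarith [h2, hmul, hK5pos, hs2, hs1]
    · rw [hK6_def]
      nlinarith [h1, hmul, hK5pos, hs2, hs1]
  -- Step E: conclusion
  set T : ℝ := max T2 ((K6/(lam*c))^2 + 1) with hT_def
  have hTT2 : T2 ≤ T := le_max_left _ _
  have hTpos : 0 < T := lt_of_lt_of_le hT2pos hTT2
  set Ca : ℝ := K6/(lam*(2*lam*c)) with hCa_def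
  set Cb : ℝ := (K5+K6)/(lam*(2*lam*c)) with hCb_def
  have hCapos : 0 < Ca := by rw [hCa_def]; positivity
  have hCbpos : 0 < Cb := by rw [hCb_def]; positivity
  refine ⟨T, hTpos, Ca + Cb + 1, by positivity, ?_⟩
  intro t ht
  have htT2 : T2 ≤ t := le_trans hTT2 ht
  have htpos : (0:ℝ) < t := lt_of_lt_of_le hTpos ht
  have ht1 : (1:ℝ) ≤ t := le_trans hT2one htT2
  have hDt := hD t htT2
  have hC5t := hC5 t htT2
  have hsq : Real.sqrt t * Real.sqrt t = t := Real.mul_self_sqrt htpos.le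
  have hspos : 0 < Real.sqrt t := Real.sqrt_pos.2 htpos
  -- K6 √t ≤ lam c t
  have hK6t : K6 * Real.sqrt t ≤ lam*c*t := by
    have h1 : (K6/(lam*c))^2 + 1 ≤ t := le_trans (le_max_right _ _) ht
    have h2 : K6/(lam*c) ≤ Real.sqrt t := by
      have h3 := Real.sqrt_le_sqrt (show (K6/(lam*c))^2 ≤ t by linarith)
      rwa [Real.sqrt_sq (by positivity)] at h3
    have h4 : K6 ≤ lam*c*Real.sqrt t := by
      rw [div_le_iff₀ (by positivity)] at h2
      linarith
    calc K6 * Real.sqrt t ≤ (lam*c*Real.sqrt t) * Real.sqrt t :=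
          mul_le_mul_of_nonneg_right h4 hspos.le
      _ = lam*c*t := by rw [mul_assoc, hsq]
  have habsD := abs_le.1 hDt
  have hul : lam*c*t ≤ u t := by linarith [habsD.1]
  -- rpow facts
  have hrpow1 : t ^ (-(1:ℝ)/2) = 1/Real.sqrt t := by
    rw [show -(1:ℝ)/2 = -(1/2) by norm_num, Real.rpow_neg htpos.le, Real.sqrt_eq_rpow]
    exact (one_div _).symm
  have hrpow3 : t ^ (-(3:ℝ)/2) = Real.sqrt t / t^2 := by
    rw [show -(3:ℝ)/2 = 1/2 - 2 by norm_num, Real.rpow_sub htpos, Real.sqrt_eq_rpow,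
      show (2:ℝ) = ((2:ℕ):ℝ) by norm_num, Real.rpow_natCast]
  constructor
  · -- estimate on y
    have hat : 0 < 2*lam*c*t := by positivity
    have hlog : y t = (1/(2*lam)) * Real.log (u t) := by
      simp only [hu_def, Real.log_exp]
      field_simp
    have hup2 : Real.log (u t) - Real.log (2*lam*c*t) ≤ K6 * Real.sqrt t / (lam*c*t) := by
      rw [← Real.log_div (hupos t).ne' hat.ne']
      have h5 := Real.log_le_sub_one_of_pos (show 0 < u t / (2*lam*c*t) by positivity)
      have h6 : u t / (2*lam*c*t) - 1 ≤ K6*Real.sqrt t/(2*lam*c*t) := by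
        have h7 : u t / (2*lam*c*t) - 1 = (u t - 2*lam*c*t)/(2*lam*c*t) := by
          field_simp
        rw [h7]
        exact (div_le_div_iff_of_pos_right hat).2 habsD.2
      have h8 : K6*Real.sqrt t/(2*lam*c*t) ≤ K6*Real.sqrt t/(lam*c*t) :=
        div_le_div_of_nonneg_left (by positivity) (by positivity) (by nlinarith)
      linarith
    have hdown : Real.log (2*lam*c*t) - Real.log (u t) ≤ K6 * Real.sqrt t/(lam*c*t) := by
      rw [← Real.log_div hat.ne' (hupos t).ne']
      have h5 := Real.log_le_sub_one_of_pos (show 0 < (2*lam*c*t)/u t by positivity)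
      have h7 : (2*lam*c*t)/u t - 1 = ((2*lam*c*t) - u t)/u t := by
        rw [sub_div, div_self (hupos t).ne']
      have h9 : ((2*lam*c*t) - u t)/u t ≤ K6*Real.sqrt t/u t :=
        (div_le_div_iff_of_pos_right (hupos t)).2 (by linarith [habsD.1])
      have h10 : K6*Real.sqrt t/u t ≤ K6*Real.sqrt t/(lam*c*t) :=
        div_le_div_of_nonneg_left (by positivity) (by positivity) hul
      linarith
    have habs2 : |Real.log (u t) - Real.log (2*lam*c*t)| ≤ K6*Real.sqrt t/(lam*c*t) := by
      rw [abs_le]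
      constructor <;> linarith
    have heq : y t - 1/(2*lam) * Real.log (2*lam*c*t) =
        (1/(2*lam)) * (Real.log (u t) - Real.log (2*lam*c*t)) := by
      rw [hlog]; ring
    rw [heq, abs_mul, abs_of_pos (show (0:ℝ) < 1/(2*lam) by positivity)]
    have hfin : (1/(2*lam)) * (K6*Real.sqrt t/(lam*c*t)) = Ca * (1/Real.sqrt t) := by
      rw [hCa_def]
      have h1 : K6*Real.sqrt t/(lam*c*t) = (K6/(lam*c)) * (Real.sqrt t/t) := by ring
      rw [h1, Real.sqrt_div_self']
      field_simp [hspos.ne', hlam.ne', hc.ne']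
    rw [hrpow1]
    calc (1/(2*lam)) * |Real.log (u t) - Real.log (2*lam*c*t)|
        ≤ (1/(2*lam)) * (K6*Real.sqrt t/(lam*c*t)) :=
          mul_le_mul_of_nonneg_left habs2 (by positivity)
      _ = Ca * (1/Real.sqrt t) := hfin
      _ ≤ (Ca + Cb + 1) * (1/Real.sqrt t) := by
          apply mul_le_mul_of_nonneg_right (by linarith) (by positivity)
  · -- estimate on deriv y
    have hkey : deriv y t - 1/(2*lam*t) =
        (u t*(2*lam*deriv y t)*t - u t)/(2*lam*u t*t) := by
      have h0 := (hupos t).ne'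
      field_simp
    rw [hkey, abs_div, abs_of_pos (show 0 < 2*lam*u t*t by positivity)]
    have h2 : K5/Real.sqrt t * t = K5 * Real.sqrt t := by
      rw [div_mul_eq_mul_div, mul_div_assoc, Real.div_sqrt]
    have hnum : |u t*(2*lam*deriv y t)*t - u t| ≤ (K5+K6)*Real.sqrt t := by
      have h1 : |(u t*(2*lam*deriv y t) - 2*lam*c)*t| ≤ K5/Real.sqrt t * t := by
        rw [abs_mul, abs_of_pos htpos]
        exact mul_le_mul_of_nonneg_right hC5t htpos.le
      have h3 : |2*lam*c*t - u t| ≤ K6 * Real.sqrt t := by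
        rw [abs_sub_comm]; exact hDt
      calc |u t*(2*lam*deriv y t)*t - u t|
          = |(u t*(2*lam*deriv y t) - 2*lam*c)*t + (2*lam*c*t - u t)| := by ring_nf
        _ ≤ |(u t*(2*lam*deriv y t) - 2*lam*c)*t| + |2*lam*c*t - u t| := abs_add_le _ _
        _ ≤ K5 * Real.sqrt t + K6 * Real.sqrt t := by
            rw [← h2]; exact add_le_add h1 h3
        _ = (K5+K6)*Real.sqrt t := by ring
    have hden : 2*lam*(lam*c*t)*t ≤ 2*lam*u t*t := by
      have := mul_le_mul_of_nonneg_left hul (show (0:ℝ) ≤ 2*lam by linarith)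
      have := mul_le_mul_of_nonneg_right this htpos.le
      linarith [this]
    have hfin2 : ((K5+K6)*Real.sqrt t)/(2*lam*(lam*c*t)*t) = Cb * (Real.sqrt t/t^2) := by
      rw [hCb_def]
      field_simp
    rw [hrpow3]
    calc |u t*(2*lam*deriv y t)*t - u t|/(2*lam*u t*t)
        ≤ ((K5+K6)*Real.sqrt t)/(2*lam*(lam*c*t)*t) :=
          div_le_div₀ (by positivity) hnum (by positivity) hden
      _ = Cb * (Real.sqrt t/t^2) := hfin2
      _ ≤ (Ca + Cb + 1) * (Real.sqrt t/t^2) := by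
          apply mul_le_mul_of_nonneg_right (by linarith) (by positivity)
end
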